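/- Let Ω ⊆ ℂ be open and let τ, ρ : Ω → ℝ be smooth with ρ > 0, satisfying on Ω the Liouville equation τ_{z z̄} = −e^{2τ}/4 and the Ribaucour equation ρ² + 4 e^{−2τ} ρ ρ_{z z̄} = 1 + 4 e^{−2τ} ρ_z ρ_{z̄}. Then the complex-valued function μ := (2/ρ)(ρ_{zz} − 2 τ_z ρ_z) satisfies μ_{z̄} = 0 on Ω, i.e. μ is holomorphic. (This is the statement that Ribaucour surfaces are Laguerre isothermic: with ψ = ρ^{−1}, the function ψ((h₂₂ − h₁₁)/2 + i h₁₂) built from the second fundamental form coefficients is holomorphic.) -/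

import Mathlib

/-- Wirtinger derivative `u_z = (u_x - i u_y)/2` of a complex-valued function on `ℂ`. -/
noncomputable def wdz (u : ℂ → ℂ) (z : ℂ) : ℂ :=
  (fderiv ℝ u z 1 - Complex.I * fderiv ℝ u z Complex.I) / 2

/-- Wirtinger derivative `u_z̄ = (u_x + i u_y)/2` of a complex-valued function on `ℂ`. -/
noncomputable def wdzbar (u : ℂ → ℂ) (z : ℂ) : ℂ :=
  (fderiv ℝ u z 1 + Complex.I * fderiv ℝ u z Complex.I) / 2

/-- The complexification of a real-valued function on `ℂ`. -/
noncomputable def cof (u : ℂ → ℝ) : ℂ → ℂ := fun z => (u z : ℂ)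

/-- General Wirtinger-type derivative: `a = -I` gives `∂_z`, `a = I` gives `∂_z̄`. -/
noncomputable def wd (a : ℂ) (u : ℂ → ℂ) (z : ℂ) : ℂ :=
  (fderiv ℝ u z 1 + a * fderiv ℝ u z Complex.I) / 2

lemma wd_congr {f g : ℂ → ℂ} {z : ℂ} (a : ℂ) (h : f =ᶠ[nhds z] g) : wd a f z = wd a g z := by
  unfold wd; rw [h.fderiv_eq]

lemma wd_const (a c : ℂ) (z : ℂ) : wd a (fun _ => c) z = 0 := by
  simp [wd, fderiv_const]

lemma wd_sub {f g : ℂ → ℂ} {z : ℂ} (a : ℂ) (hf : DifferentiableAt ℝ f z)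
    (hg : DifferentiableAt ℝ g z) :
    wd a (fun w => f w - g w) z = wd a f z - wd a g z := by
  simp only [wd, fderiv_fun_sub hf hg, ContinuousLinearMap.sub_apply]; ring

lemma wd_const_mul {f : ℂ → ℂ} {z : ℂ} (a c : ℂ) (hf : DifferentiableAt ℝ f z) :
    wd a (fun w => c * f w) z = c * wd a f z := by
  simp only [wd, fderiv_const_mul hf c, ContinuousLinearMap.smul_apply, smul_eq_mul]; ring

lemma wd_mul {f g : ℂ → ℂ} {z : ℂ} (a : ℂ) (hf : DifferentiableAt ℝ f z)
    (hg : DifferentiableAt ℝ g z) :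
    wd a (fun w => f w * g w) z = wd a f z * g z + f z * wd a g z := by
  simp only [wd, fderiv_fun_mul hf hg, ContinuousLinearMap.add_apply,
    ContinuousLinearMap.smul_apply, smul_eq_mul]; ring

lemma wd_cexp {f : ℂ → ℂ} {z : ℂ} (a : ℂ) (hf : DifferentiableAt ℝ f z) :
    wd a (fun w => Complex.exp (f w)) z = Complex.exp (f z) * wd a f z := by
  have h1 : HasFDerivAt Complex.exp
      (((1 : ℂ →L[ℂ] ℂ).smulRight (Complex.exp (f z))).restrictScalars ℝ) (f z) :=
    ((Complex.hasDerivAt_exp (f z)).hasFDerivAt).restrictScalars ℝ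
  have h2 := h1.comp z hf.hasFDerivAt
  have h3 : fderiv ℝ (fun w => Complex.exp (f w)) z = _ := h2.fderiv
  simp only [wd, h3, ContinuousLinearMap.coe_comp', Function.comp_apply,
    ContinuousLinearMap.coe_restrictScalars', ContinuousLinearMap.smulRight_apply,
    ContinuousLinearMap.one_apply, smul_eq_mul]
  ring

lemma diffAt_cexp {f : ℂ → ℂ} {z : ℂ} (hf : DifferentiableAt ℝ f z) :
    DifferentiableAt ℝ (fun w => Complex.exp (f w)) z := by
  have h1 : HasFDerivAt Complex.exp
      (((1 : ℂ →L[ℂ] ℂ).smulRight (Complex.exp (f z))).restrictScalars ℝ) (f z) :=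
    ((Complex.hasDerivAt_exp (f z)).hasFDerivAt).restrictScalars ℝ
  exact (h1.comp z hf.hasFDerivAt).differentiableAt

lemma fderiv_fderiv_apply {f : ℂ → ℂ} {z : ℂ} (hf : DifferentiableAt ℝ (fderiv ℝ f) z)
    (v u : ℂ) :
    fderiv ℝ (fun w => fderiv ℝ f w v) z u = fderiv ℝ (fderiv ℝ f) z u v := by
  have h := fderiv_clm_apply (𝕜 := ℝ) (c := fderiv ℝ f) (u := fun _ => v) hf
    (differentiableAt_const v)
  simp only [fderiv_fun_const, Pi.zero_apply, ContinuousLinearMap.comp_zero, zero_add] at h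
  rw [h]; simp

lemma wd_comm {f : ℂ → ℂ} {z : ℂ} (a b : ℂ) (hf : ContDiffAt ℝ 2 f z) :
    wd a (wd b f) z = wd b (wd a f) z := by
  have hsymm : IsSymmSndFDerivAt ℝ f z := hf.isSymmSndFDerivAt (by simp)
  have hd : DifferentiableAt ℝ (fderiv ℝ f) z :=
    (hf.fderiv_right (le_refl 2)).differentiableAt one_ne_zero
  have hdv : ∀ v : ℂ, DifferentiableAt ℝ (fun w => fderiv ℝ f w v) z := fun v =>
    hd.clm_apply (differentiableAt_const v)
  have key : ∀ c : ℂ, ∀ u : ℂ, fderiv ℝ (wd c f) z u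
      = (fderiv ℝ (fderiv ℝ f) z u 1 + c * fderiv ℝ (fderiv ℝ f) z u Complex.I) / 2 := by
    intro c u
    have h1 : HasFDerivAt (fun w => fderiv ℝ f w (1:ℂ))
        (fderiv ℝ (fun w => fderiv ℝ f w (1:ℂ)) z) z := (hdv 1).hasFDerivAt
    have h2 : HasFDerivAt (fun w => fderiv ℝ f w Complex.I)
        (fderiv ℝ (fun w => fderiv ℝ f w Complex.I) z) z := (hdv Complex.I).hasFDerivAt
    have h3 : HasFDerivAt (wd c f)
        ((2:ℂ)⁻¹ • (fderiv ℝ (fun w => fderiv ℝ f w (1:ℂ)) z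
          + c • fderiv ℝ (fun w => fderiv ℝ f w Complex.I) z)) z := by
      have := (h1.add (h2.const_smul c)).const_smul ((2:ℂ)⁻¹)
      have hfun : wd c f = (2:ℂ)⁻¹ • ((fun w => fderiv ℝ f w (1:ℂ))
          + c • fun w => fderiv ℝ f w Complex.I) := by
        funext w; simp [wd, smul_eq_mul]; ring
      rw [hfun]; exact this
    rw [h3.fderiv]
    simp only [ContinuousLinearMap.smul_apply, ContinuousLinearMap.add_apply, smul_eq_mul,
      fderiv_fderiv_apply hd]
    ring
  simp only [wd, key]
  have h1I := hsymm 1 Complex.I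
  ring_nf
  rw [h1I]
  ring

lemma wd_contDiffOn {f : ℂ → ℂ} {Ω : Set ℂ} (a : ℂ) (hΩ : IsOpen Ω)
    (hf : ContDiffOn ℝ (⊤ : ℕ∞) f Ω) : ContDiffOn ℝ (⊤ : ℕ∞) (wd a f) Ω := by
  have h1 : ContDiffOn ℝ (⊤ : ℕ∞) (fderiv ℝ f) Ω :=
    hf.fderiv_of_isOpen hΩ (by exact_mod_cast le_top)
  have h2 : ∀ v : ℂ, ContDiffOn ℝ (⊤ : ℕ∞) (fun w => fderiv ℝ f w v) Ω :=
    fun v => h1.clm_apply contDiffOn_const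
  exact (((h2 1).add (contDiffOn_const.mul (h2 Complex.I))).div_const 2 :)

theorem ribaucour_surfaces_are_laguerre_isothermic
    (Ω : Set ℂ) (hΩ : IsOpen Ω) (τ ρ : ℂ → ℝ)
    (hτ : ContDiffOn ℝ (⊤ : ℕ∞) τ Ω) (hρ : ContDiffOn ℝ (⊤ : ℕ∞) ρ Ω)
    (hρpos : ∀ z ∈ Ω, 0 < ρ z)
    (hLiouville : ∀ z ∈ Ω,
      wdzbar (wdz (cof τ)) z = -(Real.exp (2 * τ z) : ℂ) / 4)
    (hRibaucour : ∀ z ∈ Ω,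
      (ρ z : ℂ) ^ 2 + 4 * (Real.exp (-(2 * τ z)) : ℂ) * (ρ z : ℂ) * wdzbar (wdz (cof ρ)) z
        = 1 + 4 * (Real.exp (-(2 * τ z)) : ℂ) * wdz (cof ρ) z * wdzbar (cof ρ) z)
    (μ : ℂ → ℂ)
    (hμ : ∀ z ∈ Ω, μ z =
      2 / (ρ z : ℂ) * (wdz (wdz (cof ρ)) z - 2 * wdz (cof τ) z * wdz (cof ρ) z)) :
    ∀ z ∈ Ω, wdzbar μ z = 0 := by
  have hwdz : wdz = wd (-Complex.I) := by
    funext u z; simp only [wdz, wd]; ring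
  have hwdzb : wdzbar = wd Complex.I := by
    funext u z; simp only [wdzbar, wd]
  have hcof : ∀ u : ℂ → ℝ, cof u = fun w => ((u w : ℝ) : ℂ) := fun u => rfl
  simp only [hwdz, hwdzb, hcof] at hLiouville hRibaucour hμ ⊢
  intro z hz
  have hmem : Ω ∈ nhds z := hΩ.mem_nhds hz
  set FP : ℂ → ℂ := fun w => ((ρ w : ℝ) : ℂ) with hFP
  set FT : ℂ → ℂ := fun w => ((τ w : ℝ) : ℂ) with hFT
  set Pz : ℂ → ℂ := wd (-Complex.I) FP with hPz
  set Pb : ℂ → ℂ := wd Complex.I FP with hPb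
  set Tz : ℂ → ℂ := wd (-Complex.I) FT with hTz
  set Q : ℂ → ℂ := wd Complex.I Pz with hQ
  set Z2 : ℂ → ℂ := wd (-Complex.I) Pz with hZ2
  set E : ℂ → ℂ := fun w => Complex.exp (2 * FT w) with hE
  -- smoothness and differentiability
  have hPs : ContDiffOn ℝ (⊤:ℕ∞) FP Ω := Complex.ofRealCLM.contDiff.comp_contDiffOn hρ
  have hTs : ContDiffOn ℝ (⊤:ℕ∞) FT Ω := Complex.ofRealCLM.contDiff.comp_contDiffOn hτ
  have hPzs : ContDiffOn ℝ (⊤:ℕ∞) Pz Ω := wd_contDiffOn _ hΩ hPs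
  have hPbs : ContDiffOn ℝ (⊤:ℕ∞) Pb Ω := wd_contDiffOn _ hΩ hPs
  have hTzs : ContDiffOn ℝ (⊤:ℕ∞) Tz Ω := wd_contDiffOn _ hΩ hTs
  have hQs : ContDiffOn ℝ (⊤:ℕ∞) Q Ω := wd_contDiffOn _ hΩ hPzs
  have hZ2s : ContDiffOn ℝ (⊤:ℕ∞) Z2 Ω := wd_contDiffOn _ hΩ hPzs
  have dAt : ∀ {f : ℂ → ℂ}, ContDiffOn ℝ (⊤:ℕ∞) f Ω → DifferentiableAt ℝ f z :=
    fun hf => (hf.contDiffAt hmem).differentiableAt (by simp)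
  have c2At : ∀ {f : ℂ → ℂ}, ContDiffOn ℝ (⊤:ℕ∞) f Ω → ContDiffAt ℝ 2 f z :=
    fun hf => (hf.contDiffAt hmem).of_le (by norm_cast)
  have hPd := dAt hPs
  have hTd := dAt hTs
  have hPzd := dAt hPzs
  have hPbd := dAt hPbs
  have hTzd := dAt hTzs
  have hQd := dAt hQs
  have hZ2d := dAt hZ2s
  have hEd : DifferentiableAt ℝ E z := diffAt_cexp (hTd.const_mul 2)
  have hp0 : FP z ≠ 0 := by
    simp only [hFP]; exact Complex.ofReal_ne_zero.mpr (hρpos z hz).ne'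
  -- Liouville at z
  have hL : wd Complex.I Tz z = -(E z) / 4 := by
    have h := hLiouville z hz
    rw [h]
    simp only [hE, hFT]
    rw [Complex.ofReal_exp]
    push_cast
    ring
  -- Ribaucour in polynomial form on Ω
  have hG0 : ∀ w ∈ Ω,
      4*(FP w * Q w) - 4*(Pz w * Pb w) - E w * (1 - FP w * FP w) = 0 := by
    intro w hw
    have h := hRibaucour w hw
    have hex : ((Real.exp (-(2 * τ w)) : ℝ) : ℂ) = (Complex.exp (2 * ((τ w : ℝ) : ℂ)))⁻¹ := by
      rw [Complex.ofReal_exp, ← Complex.exp_neg]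
      push_cast
      ring_nf
    rw [hex] at h
    have he : Complex.exp (2 * ((τ w : ℝ) : ℂ)) ≠ 0 := Complex.exp_ne_zero _
    simp only [hFP, hE, hFT]
    field_simp at h
    linear_combination h
  have hev : (fun w => 4*(FP w * Q w) - 4*(Pz w * Pb w) - E w * (1 - FP w * FP w))
      =ᶠ[nhds z] (fun _ => (0:ℂ)) := Filter.eventuallyEq_of_mem hmem hG0
  have e1 : wd (-Complex.I)
      (fun w => 4*(FP w * Q w) - 4*(Pz w * Pb w) - E w * (1 - FP w * FP w)) z = 0 := by
    rw [wd_congr _ hev, wd_const]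
  -- commutation facts
  have comm1 : wd (-Complex.I) Pb z = Q z := by
    simp only [hPb, hQ, hPz]; exact wd_comm _ _ (c2At hPs)
  have comm2 : wd (-Complex.I) Q z = wd Complex.I Z2 z := by
    simp only [hQ, hZ2]; exact wd_comm _ _ (c2At hPzs)
  -- derivative of E
  have hEz : wd (-Complex.I) E z = E z * (2 * Tz z) := by
    have h1 : wd (-Complex.I) (fun w => Complex.exp (2 * FT w)) z
        = Complex.exp (2 * FT z) * wd (-Complex.I) (fun w => 2 * FT w) z :=
      wd_cexp _ (hTd.const_mul 2)
    have h2 : wd (-Complex.I) (fun w => 2 * FT w) z = 2 * wd (-Complex.I) FT z :=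
      wd_const_mul _ _ hTd
    have h3 : E z = Complex.exp (2 * FT z) := by simp only [hE]
    rw [h3, hE, h1, h2, ← hTz]
  -- expand the z-derivative of the Ribaucour identity
  have e2 : wd (-Complex.I)
      (fun w => 4*(FP w * Q w) - 4*(Pz w * Pb w) - E w * (1 - FP w * FP w)) z
      = 4*(Pz z * Q z + FP z * wd Complex.I Z2 z) - 4*(Z2 z * Pb z + Pz z * Q z)
        - (E z * (2 * Tz z) * (1 - FP z * FP z) + E z * (0 - (Pz z * FP z + FP z * Pz z))) := by
    have d1 : DifferentiableAt ℝ (fun w => FP w * Q w) z := hPd.mul hQd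
    have d2 : DifferentiableAt ℝ (fun w => Pz w * Pb w) z := hPzd.mul hPbd
    have d3 : DifferentiableAt ℝ (fun w => 4*(FP w * Q w) - 4*(Pz w * Pb w)) z :=
      (d1.const_mul 4).sub (d2.const_mul 4)
    have d4 : DifferentiableAt ℝ (fun w => (1:ℂ) - FP w * FP w) z :=
      (differentiableAt_const 1).sub (hPd.mul hPd)
    have s0 : wd (-Complex.I)
        (fun w => 4*(FP w * Q w) - 4*(Pz w * Pb w) - E w * (1 - FP w * FP w)) z
        = wd (-Complex.I) (fun w => 4*(FP w * Q w) - 4*(Pz w * Pb w)) z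
          - wd (-Complex.I) (fun w => E w * (1 - FP w * FP w)) z :=
      wd_sub _ d3 (hEd.mul d4)
    have s1 : wd (-Complex.I) (fun w => 4*(FP w * Q w) - 4*(Pz w * Pb w)) z
        = wd (-Complex.I) (fun w => 4*(FP w * Q w)) z
          - wd (-Complex.I) (fun w => 4*(Pz w * Pb w)) z :=
      wd_sub _ (d1.const_mul 4) (d2.const_mul 4)
    have s2 : wd (-Complex.I) (fun w => 4*(FP w * Q w)) z
        = 4 * wd (-Complex.I) (fun w => FP w * Q w) z := wd_const_mul _ _ d1
    have s3 : wd (-Complex.I) (fun w => 4*(Pz w * Pb w)) z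
        = 4 * wd (-Complex.I) (fun w => Pz w * Pb w) z := wd_const_mul _ _ d2
    have s4 : wd (-Complex.I) (fun w => FP w * Q w) z
        = wd (-Complex.I) FP z * Q z + FP z * wd (-Complex.I) Q z := wd_mul _ hPd hQd
    have s5 : wd (-Complex.I) (fun w => Pz w * Pb w) z
        = wd (-Complex.I) Pz z * Pb z + Pz z * wd (-Complex.I) Pb z := wd_mul _ hPzd hPbd
    have s6 : wd (-Complex.I) (fun w => E w * (1 - FP w * FP w)) z
        = wd (-Complex.I) E z * (1 - FP z * FP z)
          + E z * wd (-Complex.I) (fun w => (1:ℂ) - FP w * FP w) z := wd_mul _ hEd d4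
    have s7 : wd (-Complex.I) (fun w => (1:ℂ) - FP w * FP w) z
        = 0 - (wd (-Complex.I) FP z * FP z + FP z * wd (-Complex.I) FP z) := by
      have h1 : wd (-Complex.I) (fun w => (1:ℂ) - FP w * FP w) z
          = wd (-Complex.I) (fun _ => (1:ℂ)) z - wd (-Complex.I) (fun w => FP w * FP w) z :=
        wd_sub _ (differentiableAt_const 1) (hPd.mul hPd)
      have h2 : wd (-Complex.I) (fun w => FP w * FP w) z
          = wd (-Complex.I) FP z * FP z + FP z * wd (-Complex.I) FP z := wd_mul _ hPd hPd
      rw [h1, h2, wd_const]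
    rw [s0, s1, s2, s3, s4, s5, s6, s7, hEz, comm1, comm2, ← hPz, ← hZ2]
  have Eq1 : 4*(Pz z * Q z + FP z * wd Complex.I Z2 z) - 4*(Z2 z * Pb z + Pz z * Q z)
        - (E z * (2 * Tz z) * (1 - FP z * FP z) + E z * (0 - (Pz z * FP z + FP z * Pz z)))
      = 0 := by rw [← e2]; exact e1
  have Eq0 : 4*(FP z * Q z) - 4*(Pz z * Pb z) - E z * (1 - FP z * FP z) = 0 := hG0 z hz
  -- the function μ
  have hAd : DifferentiableAt ℝ (fun w => Z2 w - 2 * Tz w * Pz w) z :=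
    hZ2d.sub ((hTzd.const_mul 2).mul hPzd)
  have hμd : DifferentiableAt ℝ μ z := by
    have hform : DifferentiableAt ℝ (fun w => 2 * (FP w)⁻¹ * (Z2 w - 2 * Tz w * Pz w)) z :=
      ((hPd.inv hp0).const_mul 2).mul hAd
    apply hform.congr_of_eventuallyEq
    apply Filter.eventuallyEq_of_mem hmem
    intro w hw
    rw [hμ w hw]
    simp only [hFP]
    rw [div_eq_mul_inv]
  have e3 : wd Complex.I (fun w => FP w * μ w) z
      = wd Complex.I (fun w => 2 * (Z2 w - 2 * Tz w * Pz w)) z := by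
    apply wd_congr
    apply Filter.eventuallyEq_of_mem hmem
    intro w hw
    have hρw : ((ρ w : ℝ) : ℂ) ≠ 0 := Complex.ofReal_ne_zero.mpr (hρpos w hw).ne'
    simp only [hFP]
    rw [hμ w hw]
    field_simp
  have e4 : wd Complex.I (fun w => FP w * μ w) z
      = Pb z * μ z + FP z * wd Complex.I μ z := by
    have h := wd_mul Complex.I hPd hμd
    rw [h, ← hPb]
  have e5 : wd Complex.I (fun w => 2 * (Z2 w - 2 * Tz w * Pz w)) z
      = 2 * (wd Complex.I Z2 z - 2 * (wd Complex.I Tz z * Pz z + Tz z * Q z)) := by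
    have s1 : wd Complex.I (fun w => 2 * (Z2 w - 2 * Tz w * Pz w)) z
        = 2 * wd Complex.I (fun w => Z2 w - 2 * Tz w * Pz w) z := wd_const_mul _ _ hAd
    have s2 : wd Complex.I (fun w => Z2 w - 2 * Tz w * Pz w) z
        = wd Complex.I Z2 z - wd Complex.I (fun w => 2 * Tz w * Pz w) z :=
      wd_sub _ hZ2d ((hTzd.const_mul 2).mul hPzd)
    have s3 : wd Complex.I (fun w => 2 * Tz w * Pz w) z
        = wd Complex.I (fun w => 2 * Tz w) z * Pz z + 2 * Tz z * wd Complex.I Pz z :=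
      wd_mul _ (hTzd.const_mul 2) hPzd
    have s4 : wd Complex.I (fun w => 2 * Tz w) z = 2 * wd Complex.I Tz z :=
      wd_const_mul _ _ hTzd
    rw [s1, s2, s3, s4, ← hQ]
    ring
  have key : Pb z * μ z + FP z * wd Complex.I μ z
      = 2 * (wd Complex.I Z2 z - 2 * ((-(E z)/4) * Pz z + Tz z * Q z)) := by
    rw [← e4, e3, e5, hL]
  have hμz' : FP z * μ z = 2 * (Z2 z - 2 * Tz z * Pz z) := by
    rw [hμ z hz]
    simp only [hFP]
    have hρz : ((ρ z : ℝ) : ℂ) ≠ 0 := Complex.ofReal_ne_zero.mpr (hρpos z hz).ne'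
    field_simp
  have hW : FP z * (FP z * wd Complex.I μ z) = 0 := by
    linear_combination FP z * key - Pb z * hμz' + (1/2 : ℂ) * Eq1 - Tz z * Eq0
  rcases mul_eq_zero.mp hW with h | h
  · exact absurd h hp0
  rcases mul_eq_zero.mp h with h' | h'
  · exact absurd h' hp0
  · exact h'
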